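/- The quadrilateral set QS, the point-line configuration on [6] with lines {1,2,3}, {1,5,6}, {2,4,6}, {3,4,5}, has every proper submatroid nilpotent and every point of degree 2; consequently its circuit variety decomposes as V_{C(QS)} = V_{QS} ∪ V_{U_{2,6}}. -/

import Mathlib

open MvPolynomial Finset

variable {d : ℕ}


/-- A point-line configuration on `[d]`: lines of size ≥ 3 meeting pairwise in ≤ 1 point. -/
def IsPLC (L : Finset (Finset (Fin d))) : Prop :=
  (∀ l ∈ L, 3 ≤ l.card) ∧ ∀ l ∈ L, ∀ l' ∈ L, l ≠ l' → (l ∩ l').card ≤ 1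

/-- Independent sets of the simple rank-≤3 matroid of a point-line configuration. -/
def plcIndep (L : Finset (Finset (Fin d))) (S : Set (Fin d)) : Prop :=
  S.ncard ≤ 3 ∧ (S.ncard = 3 → ¬ ∃ l ∈ L, S ⊆ ↑l)

/-- The vector of point `i` in a tuple `x ∈ ℂ^{3d}`. -/
def vecs (x : Fin d × Fin 3 → ℂ) (i : Fin d) : Fin 3 → ℂ := fun j => x (i, j)

/-- Zariski closure of a subset of affine space. -/
def zarClosure {ι : Type} (S : Set (ι → ℂ)) : Set (ι → ℂ) :=
  {x | ∀ f : MvPolynomial ι ℂ, (∀ y ∈ S, eval y f = 0) → eval x f = 0}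

/-- Realization space of the matroid whose independent sets are given by `P`. -/
def realSpaceP (P : Set (Fin d) → Prop) : Set (Fin d × Fin 3 → ℂ) :=
  {x | ∀ S : Set (Fin d), LinearIndependent ℂ (fun i : S => vecs x i.1) ↔ P S}

/-- Matroid variety: the Zariski closure of the realization space. -/
def varP (P : Set (Fin d) → Prop) : Set (Fin d × Fin 3 → ℂ) :=
  zarClosure (realSpaceP P)

/-- Circuit variety: tuples of vectors realizing all dependencies. -/
def circuitVarP (P : Set (Fin d) → Prop) : Set (Fin d × Fin 3 → ℂ) :=
  {x | ∀ S : Set (Fin d), ¬ P S → ¬ LinearIndependent ℂ (fun i : S => vecs x i.1)}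

/-- Restriction of a line set to a subset of the ground set: lines are the traces
of size at least 3. -/
def restrictLines [DecidableEq (Fin d)] (L : Finset (Finset (Fin d))) (A : Finset (Fin d)) :
    Finset (Finset (Fin d)) :=
  (L.image (· ∩ A)).filter (fun l => 3 ≤ l.card)

/-- Degree of a point: the number of lines containing it. -/
def degreeOf (L : Finset (Finset (Fin d))) (p : Fin d) : ℕ :=
  (L.filter (fun l => p ∈ l)).card

/-- One step of the nilpotency chain: restrict to the points lying on ≥ 2 lines. -/
def plcStep (P : Finset (Fin d) × Finset (Finset (Fin d))) :
    Finset (Fin d) × Finset (Finset (Fin d)) :=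
  let A := P.1.filter (fun p => 2 ≤ degreeOf P.2 p)
  (A, restrictLines P.2 A)

/-- A configuration (ground set together with lines) is nilpotent if the chain
`M, S_M, S_{S_M}, …` reaches the empty configuration. -/
def Nilpotent (P : Finset (Fin d) × Finset (Finset (Fin d))) : Prop :=
  ∃ j : ℕ, (plcStep^[j] P).1 = ∅

/-- The quadrilateral set on `[6]` (with `6` encoded as `0`):
lines `{1,2,3}, {1,5,6}, {2,4,6}, {3,4,5}`. -/
def QS : Finset (Finset (Fin 6)) := {{1, 2, 3}, {1, 5, 0}, {2, 4, 0}, {3, 4, 5}}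

/-- Independent sets of the uniform matroid `U_{2,6}`. -/
def U26Indep (S : Set (Fin 6)) : Prop := S.ncard ≤ 2


noncomputable section
namespace QSproof
variable {R : Type*} [CommRing R]

/-- 3-dim cross product, coordinates. -/
def cr (a b : Fin 3 → R) : Fin 3 → R :=
  ![a 1 * b 2 - a 2 * b 1, a 2 * b 0 - a 0 * b 2, a 0 * b 1 - a 1 * b 0]

/-- dot product. -/
def dt (a b : Fin 3 → R) : R := a 0 * b 0 + a 1 * b 1 + a 2 * b 2

/-- determinant of three vectors. -/
def d3 (a b c : Fin 3 → R) : R := dt (cr a b) c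

lemma cr_apply (a b : Fin 3 → R) : cr a b 0 = a 1 * b 2 - a 2 * b 1 ∧
    cr a b 1 = a 2 * b 0 - a 0 * b 2 ∧ cr a b 2 = a 0 * b 1 - a 1 * b 0 := by
  refine ⟨rfl, rfl, rfl⟩

lemma d3_def (a b c : Fin 3 → R) : d3 a b c =
    (a 1 * b 2 - a 2 * b 1) * c 0 + (a 2 * b 0 - a 0 * b 2) * c 1
      + (a 0 * b 1 - a 1 * b 0) * c 2 := by
  simp [d3, dt, cr]

lemma dt_cr_left (a b : Fin 3 → R) : dt a (cr a b) = 0 := by simp [dt, cr]; ring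
lemma dt_cr_right (a b : Fin 3 → R) : dt b (cr a b) = 0 := by simp [dt, cr]; ring
lemma dt_comm (a b : Fin 3 → R) : dt a b = dt b a := by simp [dt]; ring
lemma cr_swap (a b : Fin 3 → R) : cr a b = - cr b a := by
  funext i; fin_cases i <;> simp [cr] <;> ring
lemma cr_zero_left (b : Fin 3 → R) : cr 0 b = 0 := by
  funext i; fin_cases i <;> simp [cr]
lemma cr_smul_left (c : R) (a b : Fin 3 → R) : cr (c • a) b = c • cr a b := by
  funext i; fin_cases i <;> simp [cr] <;> ring
lemma cr_add_left (a a' b : Fin 3 → R) : cr (a + a') b = cr a b + cr a' b := by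
  funext i; fin_cases i <;> simp [cr] <;> ring
lemma cr_add_right (a b b' : Fin 3 → R) : cr a (b + b') = cr a b + cr a b' := by
  funext i; fin_cases i <;> simp [cr] <;> ring
lemma cr_smul_right (c : R) (a b : Fin 3 → R) : cr a (c • b) = c • cr a b := by
  funext i; fin_cases i <;> simp [cr] <;> ring
/-- triple product expansion -/
lemma cr_cr (u v w : Fin 3 → R) : cr (cr u v) w = dt u w • v - dt v w • u := by
  funext i; fin_cases i <;> simp [cr, dt] <;> ring
/-- d3 with smul args -/
lemma d3_smul (α β γ : R) (a b c : Fin 3 → R) :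
    d3 (α • a) (β • b) (γ • c) = α * β * γ * d3 a b c := by
  simp [d3, dt, cr]; ring
/-- d3 of vectors in a common plane. -/
lemma d3_plane (a1 b1 a2 b2 a3 b3 : R) (w u : Fin 3 → R) :
    d3 (a1 • w + b1 • u) (a2 • w + b2 • u) (a3 • w + b3 • u) = 0 := by
  simp [d3, dt, cr]; ring
lemma cr_plane (a1 b1 a2 b2 : R) (w u : Fin 3 → R) :
    cr (a1 • w + b1 • u) (a2 • w + b2 • u) = (a1 * b2 - b1 * a2) • cr w u := by
  funext i; fin_cases i <;> simp [cr] <;> ring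
lemma d3_dt_cr (a b c : Fin 3 → R) : d3 a b c = dt (cr a b) c := rfl
/-- Cramer-type identity -/
lemma cramer_id (a b c e : Fin 3 → R) :
    d3 b c e • a - d3 a c e • b + d3 a b e • c - d3 a b c • e = 0 := by
  funext i; fin_cases i <;> simp [d3, dt, cr] <;> ring
lemma d3_basis (a b : Fin 3 → R) (k : Fin 3) :
    d3 a b (fun j => if j = k then 1 else 0) = cr a b k := by
  fin_cases k <;> simp [d3, dt, cr]

abbrev V3 := Fin 3 → ℂ

lemma vec_ne_zero_iff (v : V3) : v ≠ 0 ↔ v 0 ≠ 0 ∨ v 1 ≠ 0 ∨ v 2 ≠ 0 := by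
  constructor
  · intro h
    by_contra hc
    push_neg at hc
    apply h; funext i; fin_cases i <;> simp [hc.1, hc.2.1, hc.2.2]
  · rintro (h | h | h) hv <;> simp [hv] at h

lemma exists_smul_of_cr_eq_zero {a b : V3} (ha : a ≠ 0) (h : cr a b = 0) :
    ∃ c : ℂ, b = c • a := by
  have h0 := congrFun h 0
  have h1 := congrFun h 1
  have h2 := congrFun h 2
  simp [cr] at h0 h1 h2
  rcases (vec_ne_zero_iff a).1 ha with hk | hk | hk
  · refine ⟨b 0 / a 0, funext fun i => ?_⟩
    fin_cases i
    · simp; field_simp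
    · simp; field_simp; linear_combination h2
    · simp; field_simp; linear_combination -h1
  · refine ⟨b 1 / a 1, funext fun i => ?_⟩
    fin_cases i
    · simp; field_simp; linear_combination -h2
    · simp; field_simp
    · simp; field_simp; linear_combination h0
  · refine ⟨b 2 / a 2, funext fun i => ?_⟩
    fin_cases i
    · simp; field_simp; linear_combination h1
    · simp; field_simp; linear_combination -h0
    · simp; field_simp

/-- if w ⊥ u and w ⊥ v and u×v ≠ 0 then w ∈ span (u×v). -/
lemma eq_smul_cr {w u v : V3} (hu : dt u w = 0) (hv : dt v w = 0)
    (hc : cr u v ≠ 0) : ∃ c : ℂ, w = c • cr u v := by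
  apply exists_smul_of_cr_eq_zero hc
  rw [cr_cr, hu, hv]; simp

/-- three vectors orthogonal to a common nonzero vector are "degenerate". -/
lemma d3_eq_zero_of_perp {a b c n : V3} (hn : n ≠ 0) (ha : dt n a = 0)
    (hb : dt n b = 0) (hc : dt n c = 0) : d3 a b c = 0 := by
  by_cases hab : cr a b = 0
  · show dt (cr a b) c = 0
    rw [hab]; simp [dt]
  · have hdt : ∀ x y : V3, dt x y = dt y x := by intro x y; simp [dt]; ring
    obtain ⟨k, hk⟩ := eq_smul_cr ((hdt n a) ▸ ha) ((hdt n b) ▸ hb) hab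
    have hk0 : k ≠ 0 := by rintro rfl; simp at hk; exact hn hk
    have : dt n c = k * dt (cr a b) c := by rw [hk]; simp [dt]; ring
    have := hc.symm.trans this
    show dt (cr a b) c = 0
    replace this := mul_eq_zero.1 this.symm
    rcases this with h | h
    · exact absurd h hk0
    · exact h

/-- surjectivity of cross with fixed nonzero first argument onto its orthogonal plane -/
lemma exists_cr_eq {n v : V3} (hn : n ≠ 0) (hv : dt n v = 0) : ∃ u : V3, cr n u = v := by
  simp [dt] at hv
  rcases (vec_ne_zero_iff n).1 hn with hk | hk | hk
  · refine ⟨![0, v 2/(n 0), -(v 1)/(n 0)], funext fun i => ?_⟩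
    fin_cases i
    · show n 1 * (-(v 1)/(n 0)) - n 2 * (v 2/(n 0)) = v 0
      field_simp; linear_combination (-1 : ℂ) * hv
    · show n 2 * 0 - n 0 * (-(v 1)/(n 0)) = v 1
      field_simp; ring
    · show n 0 * (v 2/(n 0)) - n 1 * 0 = v 2
      field_simp; ring
  · refine ⟨![-(v 2)/(n 1), 0, v 0/(n 1)], funext fun i => ?_⟩
    fin_cases i
    · show n 1 * (v 0/(n 1)) - n 2 * 0 = v 0
      field_simp; ring
    · show n 2 * (-(v 2)/(n 1)) - n 0 * (v 0/(n 1)) = v 1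
      field_simp; linear_combination (-1 : ℂ) * hv
    · show n 0 * 0 - n 1 * (-(v 2)/(n 1)) = v 2
      field_simp; ring
  · refine ⟨![v 1/(n 2), -(v 0)/(n 2), 0], funext fun i => ?_⟩
    fin_cases i
    · show n 1 * 0 - n 2 * (-(v 0)/(n 2)) = v 0
      field_simp; ring
    · show n 2 * (v 1/(n 2)) - n 0 * 0 = v 1
      field_simp; ring
    · show n 0 * (-(v 0)/(n 2)) - n 1 * (v 1/(n 2)) = v 2
      field_simp; linear_combination (-1 : ℂ) * hv

/-- every nonzero vector has a nonzero orthogonal vector -/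
lemma exists_perp {v : V3} (hv : v ≠ 0) : ∃ n : V3, n ≠ 0 ∧ dt n v = 0 := by
  by_cases h01 : v 0 = 0 ∧ v 1 = 0
  · exact ⟨![0, 1, 0], by simp [vec_ne_zero_iff], by simp [dt, h01.2]⟩
  · refine ⟨![-(v 1), v 0, 0], ?_, by simp [dt]; ring⟩
    rw [vec_ne_zero_iff]
    rcases not_and_or.1 h01 with h | h
    · right; left; simpa using h
    · left; simpa using h

/-- every nonzero vector has u with cross ≠ 0 -/
lemma exists_cr_ne_zero {w : V3} (hw : w ≠ 0) : ∃ u : V3, cr w u ≠ 0 := by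
  by_cases h01 : w 1 = 0 ∧ w 2 = 0
  · refine ⟨![0, 1, 0], ?_⟩
    rw [vec_ne_zero_iff]
    have h0 : w 0 ≠ 0 := by
      rcases (vec_ne_zero_iff w).1 hw with h | h | h
      · exact h
      · exact absurd h01.1 h
      · exact absurd h01.2 h
    right; right; show w 0 * 1 - w 1 * 0 ≠ 0; simpa using h0
  · refine ⟨![1, 0, 0], ?_⟩
    rw [vec_ne_zero_iff]
    rcases not_and_or.1 h01 with h | h
    · right; right; show w 0 * 0 - w 1 * 1 ≠ 0; simpa using h
    · right; left; show w 2 * 1 - w 0 * 0 ≠ 0; simpa using h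

lemma li_triple_iff (u v w : V3) :
    LinearIndependent ℂ ![u, v, w] ↔ d3 u v w ≠ 0 := by
  have hM : d3 u v w = (Matrix.of ![u, v, w]).det := by
    rw [Matrix.det_fin_three]
    show dt (cr u v) w = _
    simp [dt, cr, Matrix.of_apply]
    ring
  rw [hM]
  rw [Ne, ← Matrix.exists_vecMul_eq_zero_iff]
  rw [Fintype.linearIndependent_iff]
  constructor
  · intro h
    rintro ⟨g, hg, hgv⟩
    apply hg
    funext i
    apply h g ?_ i
    funext j
    have := congrFun hgv j
    simpa [Matrix.vecMul, dotProduct, Fin.sum_univ_three, Matrix.of_apply,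
      Fin.sum_univ_succ] using this
  · intro h g hg i
    by_contra hgi
    apply h
    refine ⟨g, ?_, ?_⟩
    · intro hg0; apply hgi; rw [hg0]; rfl
    · funext j
      have := congrFun hg j
      simpa [Matrix.vecMul, dotProduct, Fin.sum_univ_three, Matrix.of_apply,
        Fin.sum_univ_succ] using this

lemma li_pair_of_cr {u v : V3} (h : cr u v ≠ 0) : LinearIndependent ℂ ![u, v] := by
  rw [linearIndependent_fin2]
  constructor
  · rintro rfl
    apply h; funext i; fin_cases i <;> simp [cr]
  · intro a hav
    apply h
    simp only [Matrix.cons_val_one, Matrix.head_cons, Matrix.cons_val_zero] at hav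
    rw [← hav]
    funext i; fin_cases i <;> simp [cr] <;> ring
variable {α : Type*}

lemma li_mono {v : α → V3} {S T : Set α} (hST : S ⊆ T)
    (h : LinearIndependent ℂ (fun i : T => v i.1)) :
    LinearIndependent ℂ (fun i : S => v i.1) :=
  h.comp (Set.inclusion hST) (Set.inclusion_injective hST)

lemma li_set_triple_iff {v : α → V3} {a b c : α} (hab : a ≠ b) (hac : a ≠ c) (hbc : b ≠ c) :
    LinearIndependent ℂ (fun i : ({a, b, c} : Set α) => v i.1) ↔
      LinearIndependent ℂ ![v a, v b, v c] := by
  have hmem : ∀ i : Fin 3, ![a, b, c] i ∈ ({a, b, c} : Set α) := by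
    intro i; fin_cases i <;> simp
  have hbij : Function.Bijective (fun i : Fin 3 =>
      (⟨![a, b, c] i, hmem i⟩ : ({a, b, c} : Set α))) := by
    constructor
    · intro i j hij
      simp only [Subtype.mk.injEq] at hij
      fin_cases i <;> fin_cases j <;> first | rfl | (exfalso; simp_all)
    · rintro ⟨x, hx⟩
      rcases hx with h | h | h
      · exact ⟨0, by simp only [Subtype.mk.injEq]; exact Subtype.ext (by simpa using h.symm)⟩
      · exact ⟨1, by simp only [Subtype.mk.injEq]; exact Subtype.ext (by simpa using h.symm)⟩
      · refine ⟨2, ?_⟩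
        simp only [Subtype.mk.injEq]
        exact Subtype.ext (by simpa using (Set.eq_of_mem_singleton h).symm)
  rw [← linearIndependent_equiv (Equiv.ofBijective _ hbij)]
  have : (fun i : ({a, b, c} : Set α) => v i.1) ∘ (Equiv.ofBijective _ hbij) =
      ![v a, v b, v c] := by
    funext i; fin_cases i <;> simp [Equiv.ofBijective_apply]
  rw [this]

lemma li_set_pair_iff {v : α → V3} {a b : α} (hab : a ≠ b) :
    LinearIndependent ℂ (fun i : ({a, b} : Set α) => v i.1) ↔
      LinearIndependent ℂ ![v a, v b] := by
  have hmem : ∀ i : Fin 2, ![a, b] i ∈ ({a, b} : Set α) := by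
    intro i; fin_cases i <;> simp
  have hbij : Function.Bijective (fun i : Fin 2 =>
      (⟨![a, b] i, hmem i⟩ : ({a, b} : Set α))) := by
    constructor
    · intro i j hij
      simp only [Subtype.mk.injEq] at hij
      fin_cases i <;> fin_cases j <;> first | rfl | (exfalso; simp_all)
    · rintro ⟨x, hx⟩
      rcases hx with h | h
      · exact ⟨0, by simp only [Subtype.mk.injEq]; exact Subtype.ext (by simpa using h.symm)⟩
      · refine ⟨1, ?_⟩
        simp only [Subtype.mk.injEq]
        exact Subtype.ext (by simpa using (Set.eq_of_mem_singleton h).symm)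
  rw [← linearIndependent_equiv (Equiv.ofBijective _ hbij)]
  have : (fun i : ({a, b} : Set α) => v i.1) ∘ (Equiv.ofBijective _ hbij) =
      ![v a, v b] := by
    funext i; fin_cases i <;> simp [Equiv.ofBijective_apply]
  rw [this]

lemma not_li_of_ncard_ge {v : α → V3} {S : Set α} (hS : 4 ≤ S.ncard) :
    ¬ LinearIndependent ℂ (fun i : S => v i.1) := by
  intro h
  obtain ⟨T, hTS, hT⟩ := Set.exists_subset_card_eq hS
  have hTfin : T.Finite := Set.finite_of_ncard_ne_zero (by omega)
  have : Fintype T := hTfin.fintype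
  have hli := li_mono hTS h
  have hcard := hli.fintype_card_le_finrank
  rw [Module.finrank_fintype_fun_eq_card] at hcard
  simp only [Fintype.card_fin] at hcard
  have : T.ncard ≤ 3 := by
    rw [← Nat.card_coe_set_eq, Nat.card_eq_fintype_card]; exact hcard
  omega
lemma zarClosure_mono_subset {ι : Type} {S T : Set (ι → ℂ)} (h : S ⊆ zarClosure T) :
    zarClosure S ⊆ zarClosure T := by
  intro x hx f hf
  exact hx f (fun y hy => h hy f hf)

lemma subset_zarClosure0 {ι : Type} (S : Set (ι → ℂ)) : S ⊆ zarClosure S :=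
  fun y hy f hf => hf y hy

/-- The key curve lemma. -/
lemma curve_lemma {ι : Type} (P : ι → Polynomial ℂ) (S : Set (ι → ℂ)) (T : Set ℂ)
    (hT : T.Infinite) (hTS : ∀ t ∈ T, (fun i => (P i).eval t) ∈ S) (t₀ : ℂ) :
    (fun i => (P i).eval t₀) ∈ zarClosure S := by
  intro f hf
  set q : Polynomial ℂ := MvPolynomial.eval₂ (Polynomial.C) P f with hq
  have hqe : ∀ t : ℂ, q.eval t = MvPolynomial.eval (fun i => (P i).eval t) f := by
    intro t
    have := MvPolynomial.eval₂_comp_left (Polynomial.evalRingHom t) Polynomial.C P f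
    simp only [Polynomial.coe_evalRingHom] at this
    rw [hq]
    show Polynomial.eval t (eval₂ Polynomial.C P f) = _
    rw [this]
    have hcomp : (Polynomial.evalRingHom t).comp Polynomial.C = RingHom.id ℂ := by
      ext z; simp
    rw [hcomp]
    rw [MvPolynomial.eval₂_id]
    rfl
  have hq0 : q = 0 := by
    apply Polynomial.eq_zero_of_infinite_isRoot
    apply Set.Infinite.mono ?_ hT
    intro t ht
    show q.eval t = 0
    rw [hqe]
    exact hf _ (hTS t ht)
  rw [← hqe, hq0]
  simp

/-! ### Characterization of realization spaces -/

def OnLine (a b c : Fin 6) : Prop := ∃ l ∈ QS, a ∈ l ∧ b ∈ l ∧ c ∈ l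

instance : DecidablePred (fun p : Fin 6 × Fin 6 × Fin 6 => OnLine p.1 p.2.1 p.2.2) := by
  intro p; unfold OnLine; infer_instance

instance (a b c : Fin 6) : Decidable (OnLine a b c) := by
  unfold OnLine; infer_instance

lemma subset_pair_of_ncard_le_two {S : Set (Fin 6)} (h : S.ncard ≤ 2) :
    ∃ a b : Fin 6, a ≠ b ∧ S ⊆ {a, b} := by
  have hfin : S.Finite := Set.toFinite S
  rcases hn : S.ncard with _ | n
  · rw [Set.ncard_eq_zero hfin] at hn
    exact ⟨0, 1, by decide, by rw [hn]; exact Set.empty_subset _⟩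
  rcases n with _ | n
  · rw [Set.ncard_eq_one] at hn
    obtain ⟨a, rfl⟩ := hn
    obtain ⟨b, hb⟩ := exists_ne a
    exact ⟨a, b, (Ne.symm hb), by intro x hx; left; exact hx⟩
  rcases n with _ | n
  · rw [Set.ncard_eq_two] at hn
    obtain ⟨a, b, hab, rfl⟩ := hn
    exact ⟨a, b, hab, le_refl _⟩
  · omega

lemma extend_pair : ∀ a b : Fin 6, a ≠ b → ∃ c, a ≠ c ∧ b ≠ c ∧ ¬ OnLine a b c := by
  decide

lemma mem_realSpace_QS (y : Fin 6 × Fin 3 → ℂ)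
    (H0 : ∀ a b c : Fin 6, OnLine a b c → d3 (vecs y a) (vecs y b) (vecs y c) = 0)
    (H1 : ∀ a b c : Fin 6, a ≠ b → a ≠ c → b ≠ c → ¬ OnLine a b c →
      d3 (vecs y a) (vecs y b) (vecs y c) ≠ 0) :
    y ∈ realSpaceP (plcIndep QS) := by
  intro S
  constructor
  · intro hLI
    constructor
    · by_contra hc
      exact not_li_of_ncard_ge (by omega) hLI
    · rintro h3 ⟨l, hl, hSl⟩
      obtain ⟨a, b, c, hab, hac, hbc, rfl⟩ := Set.ncard_eq_three.1 h3
      have hon : OnLine a b c := by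
        refine ⟨l, hl, ?_, ?_, ?_⟩ <;> apply hSl <;> simp
      rw [li_set_triple_iff hab hac hbc, li_triple_iff] at hLI
      exact hLI (H0 a b c hon)
  · rintro ⟨h3, hline⟩
    rcases Nat.lt_or_ge S.ncard 3 with hlt | hge
    · obtain ⟨a, b, hab, hS⟩ := subset_pair_of_ncard_le_two (S := S) (by omega)
      obtain ⟨c, hac, hbc, hnot⟩ := extend_pair a b hab
      have htri : LinearIndependent ℂ (fun i : ({a, b, c} : Set (Fin 6)) => vecs y i.1) := by
        rw [li_set_triple_iff hab hac hbc, li_triple_iff]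
        exact H1 a b c hab hac hbc hnot
      have hsub : S ⊆ ({a, b, c} : Set (Fin 6)) := by
        refine hS.trans ?_
        intro x hx
        rcases hx with h | h
        · exact Set.mem_insert_iff.2 (Or.inl h)
        · exact Set.mem_insert_iff.2 (Or.inr (Set.mem_insert_iff.2 (Or.inl h)))
      exact li_mono hsub htri
    · have h3' : S.ncard = 3 := le_antisymm h3 hge
      obtain ⟨a, b, c, hab, hac, hbc, rfl⟩ := Set.ncard_eq_three.1 h3'
      rw [li_set_triple_iff hab hac hbc, li_triple_iff]
      apply H1 a b c hab hac hbc
      rintro ⟨l, hl, ha, hb, hc⟩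
      refine hline h3' ⟨l, hl, ?_⟩
      intro x hx
      rcases hx with h | h | h
      · simpa [h] using ha
      · simpa [h] using hb
      · simp only [Set.mem_singleton_iff] at h; simpa [h] using hc

lemma mem_realSpace_U26 (y : Fin 6 × Fin 3 → ℂ)
    (H0 : ∀ a b c : Fin 6, a ≠ b → a ≠ c → b ≠ c →
      d3 (vecs y a) (vecs y b) (vecs y c) = 0)
    (H2 : ∀ a b : Fin 6, a ≠ b → cr (vecs y a) (vecs y b) ≠ 0) :
    y ∈ realSpaceP U26Indep := by
  intro S
  constructor
  · intro hLI
    show S.ncard ≤ 2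
    by_contra hc
    obtain ⟨T, hTS, hT⟩ := Set.exists_subset_card_eq (s := S) (n := 3) (by omega)
    obtain ⟨a, b, c, hab, hac, hbc, rfl⟩ := Set.ncard_eq_three.1 hT
    have := li_mono hTS hLI
    rw [li_set_triple_iff hab hac hbc, li_triple_iff] at this
    exact this (H0 a b c hab hac hbc)
  · intro h2
    obtain ⟨a, b, hab, hS⟩ := subset_pair_of_ncard_le_two h2
    have hpair : LinearIndependent ℂ (fun i : ({a, b} : Set (Fin 6)) => vecs y i.1) := by
      rw [li_set_pair_iff hab]
      exact li_pair_of_cr (H2 a b hab)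
    exact li_mono hS hpair

/-! ### Combinatorial tables for QS -/

def linesOf : Fin 6 → Fin 4 × Fin 4 :=
  ![(1, 2), (0, 1), (0, 2), (0, 3), (2, 3), (1, 3)]

def lineSet : Fin 4 → Finset (Fin 6) :=
  ![{1, 2, 3}, {1, 5, 0}, {2, 4, 0}, {3, 4, 5}]

def gZ : Fin 4 → Fin 3 → ℤ := ![![1, 0, 0], ![0, 1, 0], ![0, 0, 1], ![1, 1, 1]]

def stdZ : Fin 6 → Fin 3 → ℤ := fun p => cr (gZ (linesOf p).1) (gZ (linesOf p).2)

def gC : Fin 4 → V3 := fun i ν => ((gZ i ν : ℤ) : ℂ)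

lemma d3_cast (f g h : Fin 3 → ℤ) :
    d3 (fun ν => ((f ν : ℤ) : ℂ)) (fun ν => ((g ν : ℤ) : ℂ)) (fun ν => ((h ν : ℤ) : ℂ))
      = ((d3 f g h : ℤ) : ℂ) := by
  simp [d3, dt, cr]

lemma cr_cast (f g : Fin 3 → ℤ) :
    cr (fun ν => ((f ν : ℤ) : ℂ)) (fun ν => ((g ν : ℤ) : ℂ))
      = fun ν => ((cr f g ν : ℤ) : ℂ) := by
  funext ν; fin_cases ν <;> simp [cr]

lemma stdC_eq (p : Fin 6) : cr (gC (linesOf p).1) (gC (linesOf p).2)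
    = fun ν => ((stdZ p ν : ℤ) : ℂ) := by
  rw [stdZ]
  exact cr_cast _ _

lemma stdZ_nondeg : ∀ a b c : Fin 6, a ≠ b → a ≠ c → b ≠ c → ¬ OnLine a b c →
    d3 (stdZ a) (stdZ b) (stdZ c) ≠ 0 := by decide

lemma std_nondeg : ∀ a b c : Fin 6, a ≠ b → a ≠ c → b ≠ c → ¬ OnLine a b c →
    d3 (cr (gC (linesOf a).1) (gC (linesOf a).2)) (cr (gC (linesOf b).1) (gC (linesOf b).2))
      (cr (gC (linesOf c).1) (gC (linesOf c).2)) ≠ 0 := by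
  intro a b c hab hac hbc hon
  rw [stdC_eq, stdC_eq, stdC_eq, d3_cast]
  exact_mod_cast stdZ_nondeg a b c hab hac hbc hon

lemma mem_lineSet_iff : ∀ (li : Fin 4) (p : Fin 6),
    p ∈ lineSet li ↔ (li = (linesOf p).1 ∨ li = (linesOf p).2) := by decide

lemma fst_ne_snd : ∀ p : Fin 6, (linesOf p).1 ≠ (linesOf p).2 := by decide

lemma no_reverse : ∀ p q : Fin 6,
    ¬((linesOf p).1 = (linesOf q).2 ∧ (linesOf p).2 = (linesOf q).1) := by decide

lemma linesOf_inj : ∀ p q : Fin 6, linesOf p = linesOf q → p = q := by decide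

lemma cover3 : ∀ a b c : Fin 4, a ≠ b → a ≠ c → b ≠ c →
    ∀ q : Fin 6, q ∈ lineSet a ∨ q ∈ lineSet b ∨ q ∈ lineSet c := by decide

lemma onLine_iff : ∀ a b c : Fin 6, OnLine a b c ↔
    ∃ li : Fin 4, a ∈ lineSet li ∧ b ∈ lineSet li ∧ c ∈ lineSet li := by decide

lemma line_pts : ∀ li : Fin 4, ∃ p q r : Fin 6, p ≠ q ∧ p ≠ r ∧ q ≠ r ∧
    OnLine p q r ∧ lineSet li = {p, q, r} := by decide

/-! ### normal vector to a degenerate line -/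

lemma line_normal {a b c : V3} (h : d3 a b c = 0) :
    ∃ n : V3, n ≠ 0 ∧ dt n a = 0 ∧ dt n b = 0 ∧ dt n c = 0 := by
  have hdt : ∀ x y : V3, dt x y = dt y x := fun x y => dt_comm x y
  by_cases hab : cr a b ≠ 0
  · refine ⟨cr a b, hab, ?_, ?_, ?_⟩
    · rw [hdt]; exact dt_cr_left a b
    · rw [hdt]; exact dt_cr_right a b
    · exact h
  push_neg at hab
  by_cases hac : cr a c ≠ 0
  · refine ⟨cr a c, hac, ?_, ?_, ?_⟩
    · rw [hdt]; exact dt_cr_left a c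
    · show dt (cr a c) b = 0
      have : dt (cr a c) b = - d3 a b c + dt (cr a b) c - dt (cr a b) c := by
        simp [d3, dt, cr]; ring
      rw [this, h]; ring
    · rw [hdt]; exact dt_cr_right a c
  push_neg at hac
  by_cases hbc : cr b c ≠ 0
  · refine ⟨cr b c, hbc, ?_, ?_, ?_⟩
    · show dt (cr b c) a = 0
      have : dt (cr b c) a = d3 a b c - dt (cr a b) c + dt (cr a b) c := by
        simp [d3, dt, cr]; ring
      rw [this, h]; ring
    · rw [hdt]; exact dt_cr_left b c
    · rw [hdt]; exact dt_cr_right b c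
  push_neg at hbc
  -- flat case
  by_cases ha : a ≠ 0
  · obtain ⟨n, hn0, hna⟩ := exists_perp ha
    obtain ⟨cb, hcb⟩ := exists_smul_of_cr_eq_zero ha hab
    obtain ⟨cc, hcc⟩ := exists_smul_of_cr_eq_zero ha hac
    refine ⟨n, hn0, hna, ?_, ?_⟩
    · rw [hcb]; show dt n (cb • a) = 0
      have : dt n (cb • a) = cb * dt n a := by simp [dt]; ring
      rw [this, hna, mul_zero]
    · rw [hcc]
      have : dt n (cc • a) = cc * dt n a := by simp [dt]; ring
      rw [this, hna, mul_zero]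
  push_neg at ha
  by_cases hb : b ≠ 0
  · obtain ⟨n, hn0, hnb⟩ := exists_perp hb
    obtain ⟨cc, hcc⟩ := exists_smul_of_cr_eq_zero hb hbc
    refine ⟨n, hn0, ?_, hnb, ?_⟩
    · rw [ha]; simp [dt]
    · rw [hcc]
      have : dt n (cc • b) = cc * dt n b := by simp [dt]; ring
      rw [this, hnb, mul_zero]
  push_neg at hb
  by_cases hc : c ≠ 0
  · obtain ⟨n, hn0, hnc⟩ := exists_perp hc
    exact ⟨n, hn0, by rw [ha]; simp [dt], by rw [hb]; simp [dt], hnc⟩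
  push_neg at hc
  exact ⟨![1,0,0], by rw [vec_ne_zero_iff]; left; norm_num,
    by rw [ha]; simp [dt], by rw [hb]; simp [dt], by rw [hc]; simp [dt]⟩

/-! ### Polynomial curve machinery -/

abbrev PV := Fin 3 → Polynomial ℂ

def evalV (t : ℂ) (u : PV) : V3 := fun ν => (u ν).eval t

def NPgen (n m g : V3) : PV := fun ν =>
  Polynomial.C (n ν) + Polynomial.C (m ν) * Polynomial.X
    + Polynomial.C (g ν) * Polynomial.X ^ 2

lemma evalV_NPgen (t : ℂ) (n m g : V3) :
    evalV t (NPgen n m g) = fun ν => n ν + m ν * t + g ν * t ^ 2 := by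
  funext ν; simp [evalV, NPgen]

lemma evalV_NPgen_zero (n m g : V3) : evalV 0 (NPgen n m g) = n := by
  funext ν; simp [evalV, NPgen]

lemma evalV_cr (t : ℂ) (u v : PV) : evalV t (cr u v) = cr (evalV t u) (evalV t v) := by
  funext ν; fin_cases ν <;> simp [evalV, cr]

lemma eval_dt (t : ℂ) (u v : PV) : (dt u v).eval t = dt (evalV t u) (evalV t v) := by
  simp [evalV, dt]

lemma eval_d3 (t : ℂ) (u v w : PV) :
    (d3 u v w).eval t = d3 (evalV t u) (evalV t v) (evalV t w) := by
  rw [d3, eval_dt, evalV_cr]; rfl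

lemma NPgen_rev (n m g : V3) {t : ℂ} (ht : t ≠ 0) :
    evalV t (NPgen g m n) = t ^ 2 • evalV t⁻¹ (NPgen n m g) := by
  funext ν
  rw [evalV_NPgen, evalV_NPgen]
  show g ν + m ν * t + n ν * t ^ 2 = t ^ 2 * (n ν + m ν * t⁻¹ + g ν * t⁻¹ ^ 2)
  field_simp
  ring

lemma dt_polyX (u w : PV) :
    dt u (fun ν => Polynomial.X * w ν) = Polynomial.X * dt u w := by
  simp [dt]; ring

lemma quad_ne_zero (a b c : ℂ) (hc : c ≠ 0) :
    Polynomial.C a + Polynomial.C b * Polynomial.X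
      + Polynomial.C c * Polynomial.X ^ 2 ≠ 0 := by
  intro h
  have := congrArg (fun q : Polynomial ℂ => q.coeff 2) h
  simp only [Polynomial.coeff_add, Polynomial.coeff_C, Polynomial.coeff_C_mul,
    Polynomial.coeff_X_pow, Polynomial.coeff_X, Polynomial.coeff_zero] at this
  norm_num at this
  exact hc this


def cubic (a b c d : V3) : PV := fun ν =>
  Polynomial.C (a ν) + Polynomial.C (b ν) * Polynomial.X
    + Polynomial.C (c ν) * Polynomial.X ^ 2 + Polynomial.C (d ν) * Polynomial.X ^ 3

lemma hkey_lemma (ni mi gi nj mj gj : V3) (h00 : ∀ ν, cr ni nj ν = 0) (ν : Fin 3) :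
    cr (NPgen ni mi gi) (NPgen nj mj gj) ν = Polynomial.X * cubic (cr ni mj + cr mi nj)
      (cr ni gj + cr mi mj + cr gi nj) (cr mi gj + cr gi mj) (cr gi gj) ν := by
  apply Polynomial.funext
  intro t
  have hL : (cr (NPgen ni mi gi) (NPgen nj mj gj) ν).eval t
      = cr (evalV t (NPgen ni mi gi)) (evalV t (NPgen nj mj gj)) ν :=
    congrFun (evalV_cr t _ _) ν
  rw [hL, evalV_NPgen, evalV_NPgen]
  have h0ν := h00 ν
  fin_cases ν <;>
    (simp only [Polynomial.eval_mul, Polynomial.eval_X, cubic, Polynomial.eval_add,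
      Polynomial.eval_C, Polynomial.eval_pow, Pi.add_apply] <;>
     simp [cr] at h0ν ⊢ <;> linear_combination h0ν)

lemma orth_case_C (ni mi gi nj mj gj : V3) (c : ℂ) (h00 : ∀ ν, cr ni nj ν = 0)
    {w : PV} (hw : w = NPgen ni mi gi ∨ w = NPgen nj mj gj) :
    dt w (fun ν => Polynomial.C c * cubic (cr ni mj + cr mi nj)
      (cr ni gj + cr mi mj + cr gi nj) (cr mi gj + cr gi mj) (cr gi gj) ν) = 0 := by
  set hSh : PV := cubic (cr ni mj + cr mi nj)
    (cr ni gj + cr mi mj + cr gi nj) (cr mi gj + cr gi mj) (cr gi gj) with hhSh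
  have h1 : dt w (fun ν => Polynomial.C c * hSh ν) = Polynomial.C c * dt w hSh := by
    simp [dt]; ring
  have h2 : Polynomial.X * dt w hSh = dt w (cr (NPgen ni mi gi) (NPgen nj mj gj)) := by
    have he : dt w (cr (NPgen ni mi gi) (NPgen nj mj gj))
        = dt w (fun ν => Polynomial.X * hSh ν) := by
      congr 1
      funext ν
      exact hkey_lemma ni mi gi nj mj gj h00 ν
    rw [he, dt_polyX]
  have hX : Polynomial.X * dt w (fun ν => Polynomial.C c * hSh ν) = 0 := by
    rw [h1]
    calc Polynomial.X * (Polynomial.C c * dt w hSh)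
        = Polynomial.C c * (Polynomial.X * dt w hSh) := by ring
      _ = Polynomial.C c * dt w (cr (NPgen ni mi gi) (NPgen nj mj gj)) := by rw [h2]
      _ = 0 := by
          rcases hw with rfl | rfl
          · rw [dt_cr_left, mul_zero]
          · rw [dt_cr_right, mul_zero]
  rcases mul_eq_zero.1 hX with h | h
  · exact absurd h Polynomial.X_ne_zero
  · exact h

/-- the per-point curve data -/
lemma point_curve (iv ni mi gi nj mj gj : V3)
    (H : iv = 0 ∨ (∃ c : ℂ, c ≠ 0 ∧ iv = c • cr ni nj) ∨
      (cr ni nj = 0 ∧ ∃ c : ℂ, c ≠ 0 ∧ iv = c • (cr ni mj + cr mi nj))) :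
    ∃ (G GR : PV) (ct : ℂ) (dd : ℕ),
      ct ≠ 0 ∧
      evalV 0 G = iv ∧
      evalV 0 GR = ct • cr gi gj ∧
      (∀ t : ℂ, t ≠ 0 → evalV t GR = t ^ dd • evalV t⁻¹ G) ∧
      dt (NPgen ni mi gi) G = 0 ∧
      dt (NPgen nj mj gj) G = 0 := by
  have hrevcr : ∀ t : ℂ, t ≠ 0 → evalV t (cr (NPgen gi mi ni) (NPgen gj mj nj))
      = t ^ 4 • evalV t⁻¹ (cr (NPgen ni mi gi) (NPgen nj mj gj)) := by
    intro t ht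
    rw [evalV_cr, evalV_cr, NPgen_rev _ _ _ ht, NPgen_rev _ _ _ ht,
      cr_smul_left, cr_smul_right, smul_smul, show t ^ 2 * t ^ 2 = t ^ 4 by ring]
  rcases H with h0 | ⟨c, hc, hcv⟩ | ⟨hcr0, c, hc, hcv⟩
  · -- case A : iv = 0
    refine ⟨fun ν => Polynomial.X * cr (NPgen ni mi gi) (NPgen nj mj gj) ν,
      cr (NPgen gi mi ni) (NPgen gj mj nj), 1, 5, one_ne_zero, ?_, ?_, ?_, ?_, ?_⟩
    · funext ν; simp [evalV, h0]
    · rw [evalV_cr, evalV_NPgen_zero, evalV_NPgen_zero, one_smul]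
    · intro t ht
      rw [hrevcr t ht]
      have : evalV t⁻¹ (fun ν => Polynomial.X * cr (NPgen ni mi gi) (NPgen nj mj gj) ν)
          = t⁻¹ • evalV t⁻¹ (cr (NPgen ni mi gi) (NPgen nj mj gj)) := by
        funext ν; simp [evalV]
      rw [this, smul_smul]
      have h5 : t ^ 5 * t⁻¹ = t ^ 4 := by field_simp
      rw [h5]
    · rw [dt_polyX, dt_cr_left, mul_zero]
    · rw [dt_polyX, dt_cr_right, mul_zero]
  · -- case B : iv = c • cr ni nj
    refine ⟨fun ν => Polynomial.C c * cr (NPgen ni mi gi) (NPgen nj mj gj) ν,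
      fun ν => Polynomial.C c * cr (NPgen gi mi ni) (NPgen gj mj nj) ν,
      c, 4, hc, ?_, ?_, ?_, ?_, ?_⟩
    · funext ν
      have := congrFun (evalV_cr 0 (NPgen ni mi gi) (NPgen nj mj gj)) ν
      simp only [evalV_NPgen_zero] at this
      simp only [evalV, Polynomial.eval_mul, Polynomial.eval_C]
      rw [show ((cr (NPgen ni mi gi) (NPgen nj mj gj) ν).eval 0) = cr ni nj ν from this]
      rw [hcv]; rfl
    · funext ν
      have := congrFun (evalV_cr 0 (NPgen gi mi ni) (NPgen gj mj nj)) ν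
      simp only [evalV_NPgen_zero] at this
      simp only [evalV, Polynomial.eval_mul, Polynomial.eval_C]
      rw [show ((cr (NPgen gi mi ni) (NPgen gj mj nj) ν).eval 0) = cr gi gj ν from this]
      rfl
    · intro t ht
      have hx := congrFun (hrevcr t ht)
      funext ν
      simp only [evalV, Polynomial.eval_mul, Polynomial.eval_C]
      have := hx ν
      simp only [evalV, Pi.smul_apply, smul_eq_mul] at this
      rw [this]
      simp only [Pi.smul_apply, smul_eq_mul, evalV, Polynomial.eval_mul, Polynomial.eval_C]
      ring
    · have : dt (NPgen ni mi gi) (fun ν => Polynomial.C c * cr (NPgen ni mi gi) (NPgen nj mj gj) ν)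
          = Polynomial.C c * dt (NPgen ni mi gi) (cr (NPgen ni mi gi) (NPgen nj mj gj)) := by
        simp [dt]; ring
      rw [this, dt_cr_left, mul_zero]
    · have : dt (NPgen nj mj gj) (fun ν => Polynomial.C c * cr (NPgen ni mi gi) (NPgen nj mj gj) ν)
          = Polynomial.C c * dt (NPgen nj mj gj) (cr (NPgen ni mi gi) (NPgen nj mj gj)) := by
        simp [dt]; ring
      rw [this, dt_cr_right, mul_zero]
  · -- case C : shifted curve
    have h00 : ∀ ν, cr ni nj ν = 0 := fun ν => congrFun hcr0 ν
    refine ⟨fun ν => Polynomial.C c * cubic (cr ni mj + cr mi nj)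
        (cr ni gj + cr mi mj + cr gi nj) (cr mi gj + cr gi mj) (cr gi gj) ν,
      fun ν => Polynomial.C c * cubic (cr gi gj) (cr mi gj + cr gi mj)
        (cr ni gj + cr mi mj + cr gi nj) (cr ni mj + cr mi nj) ν,
      c, 3, hc, ?_, ?_, ?_, ?_, ?_⟩
    · funext ν
      simp only [evalV, Polynomial.eval_mul, Polynomial.eval_C, cubic,
        Polynomial.eval_add, Polynomial.eval_pow, Polynomial.eval_X]
      rw [hcv]
      simp
    · funext ν
      simp only [evalV, Polynomial.eval_mul, Polynomial.eval_C, cubic,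
        Polynomial.eval_add, Polynomial.eval_pow, Polynomial.eval_X]
      simp
    · intro t ht
      funext ν
      simp only [evalV, Polynomial.eval_mul, Polynomial.eval_C, cubic,
        Polynomial.eval_add, Polynomial.eval_pow, Polynomial.eval_X,
        Pi.smul_apply, smul_eq_mul]
      field_simp
      ring
    · exact orth_case_C ni mi gi nj mj gj c h00 (Or.inl rfl)
    · exact orth_case_C ni mi gi nj mj gj c h00 (Or.inr rfl)

def NPl (n m : Fin 4 → V3) : Fin 4 → PV := fun i => NPgen (n i) (m i) (gC i)

def nusel : Fin 4 → Fin 3 := ![0, 1, 2, 0]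

lemma gC_nusel : ∀ i : Fin 4, gC i (nusel i) = 1 := by
  intro i; fin_cases i <;> simp [gC, gZ, nusel]

lemma rank3_mem (x : Fin 6 × Fin 3 → ℂ) (n m : Fin 4 → V3)
    (hpt : ∀ p : Fin 6, vecs x p = 0 ∨
      (∃ c : ℂ, c ≠ 0 ∧ vecs x p = c • cr (n (linesOf p).1) (n (linesOf p).2)) ∨
      (cr (n (linesOf p).1) (n (linesOf p).2) = 0 ∧ ∃ c : ℂ, c ≠ 0 ∧
        vecs x p = c • (cr (n (linesOf p).1) (m (linesOf p).2)
          + cr (m (linesOf p).1) (n (linesOf p).2)))) :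
    x ∈ zarClosure (realSpaceP (plcIndep QS)) := by
  classical
  have H : ∀ p : Fin 6, ∃ (G GR : PV) (ct : ℂ) (dd : ℕ),
      ct ≠ 0 ∧
      evalV 0 G = vecs x p ∧
      evalV 0 GR = ct • cr (gC (linesOf p).1) (gC (linesOf p).2) ∧
      (∀ t : ℂ, t ≠ 0 → evalV t GR = t ^ dd • evalV t⁻¹ G) ∧
      dt (NPgen (n (linesOf p).1) (m (linesOf p).1) (gC (linesOf p).1)) G = 0 ∧
      dt (NPgen (n (linesOf p).2) (m (linesOf p).2) (gC (linesOf p).2)) G = 0 :=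
    fun p => point_curve (vecs x p) _ _ _ _ _ _ (hpt p)
  choose G GR ct dd hct h0 hR0 hrev ho1 ho2 using H
  -- nonvanishing of the independence polynomials
  have hqne : ∀ a b c : Fin 6, a ≠ b → a ≠ c → b ≠ c → ¬ OnLine a b c →
      d3 (G a) (G b) (G c) ≠ 0 := by
    intro a b c hab hac hbc hon hq0
    have hall : ∀ t : ℂ, d3 (evalV t (G a)) (evalV t (G b)) (evalV t (G c)) = 0 := by
      intro t; rw [← eval_d3, hq0]; simp
    have hqR : d3 (GR a) (GR b) (GR c) = 0 := by
      apply Polynomial.eq_zero_of_infinite_isRoot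
      apply Set.Infinite.mono ?_ ((Set.finite_singleton (0 : ℂ)).infinite_compl)
      intro s hs
      have hs0 : s ≠ 0 := by simpa using hs
      show (d3 (GR a) (GR b) (GR c)).eval s = 0
      rw [eval_d3, hrev a s hs0, hrev b s hs0, hrev c s hs0, d3_smul, hall, mul_zero]
    have h0R := congrArg (fun q : Polynomial ℂ => q.eval 0) hqR
    simp only [Polynomial.eval_zero] at h0R
    rw [eval_d3, hR0, hR0, hR0, d3_smul] at h0R
    rcases mul_eq_zero.1 h0R with h | h
    · rcases mul_eq_zero.1 h with h' | h'
      · rcases mul_eq_zero.1 h' with h'' | h''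
        · exact hct a h''
        · exact hct b h''
      · exact hct c h'
    · exact std_nondeg a b c hab hac hbc hon h
  have hNP_ne : ∀ i : Fin 4, NPl n m i (nusel i) ≠ 0 := by
    intro i
    have : NPl n m i (nusel i) = Polynomial.C (n i (nusel i))
        + Polynomial.C (m i (nusel i)) * Polynomial.X
        + Polynomial.C (gC i (nusel i)) * Polynomial.X ^ 2 := rfl
    rw [this, gC_nusel]
    exact quad_ne_zero _ _ _ one_ne_zero
  -- the bad set
  set Bset : Fin 6 × Fin 6 × Fin 6 → Set ℂ := fun tr =>
    if tr.1 ≠ tr.2.1 ∧ tr.1 ≠ tr.2.2 ∧ tr.2.1 ≠ tr.2.2 ∧ ¬ OnLine tr.1 tr.2.1 tr.2.2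
    then {t | (d3 (G tr.1) (G tr.2.1) (G tr.2.2)).IsRoot t} else ∅ with hBset
  have hBsetFin : ∀ tr, (Bset tr).Finite := by
    intro tr
    rw [hBset]
    dsimp only
    split_ifs with h
    · exact Polynomial.finite_setOf_isRoot (hqne tr.1 tr.2.1 tr.2.2 h.1 h.2.1 h.2.2.1 h.2.2.2)
    · exact Set.finite_empty
  set B1 : Set ℂ := ⋃ tr ∈ (Finset.univ : Finset (Fin 6 × Fin 6 × Fin 6)), Bset tr with hB1
  have hB1fin : B1.Finite :=
    Set.Finite.biUnion (Finset.univ : Finset (Fin 6 × Fin 6 × Fin 6)).finite_toSet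
      (fun tr _ => hBsetFin tr)
  set B2 : Set ℂ := ⋃ i ∈ (Finset.univ : Finset (Fin 4)),
    {t | (NPl n m i (nusel i)).IsRoot t} with hB2
  have hB2fin : B2.Finite :=
    Set.Finite.biUnion (Finset.univ : Finset (Fin 4)).finite_toSet
      (fun i _ => Polynomial.finite_setOf_isRoot (hNP_ne i))
  set T : Set ℂ := (B1 ∪ B2)ᶜ with hT
  have hTinf : T.Infinite := (hB1fin.union hB2fin).infinite_compl
  -- membership in the realization space along the curve
  have hTmem : ∀ t ∈ T, (fun pr : Fin 6 × Fin 3 => (G pr.1 pr.2).eval t)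
      ∈ realSpaceP (plcIndep QS) := by
    intro t ht
    have hv : ∀ p : Fin 6, vecs (fun pr : Fin 6 × Fin 3 => (G pr.1 pr.2).eval t) p
        = evalV t (G p) := fun p => rfl
    have htB1 : t ∉ B1 := fun h => ht (Or.inl h)
    have htB2 : t ∉ B2 := fun h => ht (Or.inr h)
    apply mem_realSpace_QS
    · -- degenerate triples on lines
      intro a b c hon
      obtain ⟨li, hali, hbli, hcli⟩ := (onLine_iff a b c).1 hon
      have hnt : evalV t (NPl n m li) ≠ 0 := by
        intro hz
        apply htB2
        rw [hB2]
        refine Set.mem_biUnion (Finset.mem_coe.2 (Finset.mem_univ li)) ?_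
        show (NPl n m li (nusel li)).eval t = 0
        have := congrFun hz (nusel li)
        exact this
      have hperp : ∀ p : Fin 6, p ∈ lineSet li →
          dt (evalV t (NPl n m li)) (evalV t (G p)) = 0 := by
        intro p hp
        rcases (mem_lineSet_iff li p).1 hp with hfst | hsnd
        · rw [← eval_dt]
          rw [hfst]
          show (dt (NPgen (n (linesOf p).1) (m (linesOf p).1) (gC (linesOf p).1)) (G p)).eval t = 0
          rw [ho1 p]
          simp
        · rw [← eval_dt]
          rw [hsnd]
          show (dt (NPgen (n (linesOf p).2) (m (linesOf p).2) (gC (linesOf p).2)) (G p)).eval t = 0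
          rw [ho2 p]
          simp
      rw [hv, hv, hv]
      exact d3_eq_zero_of_perp hnt (hperp a hali) (hperp b hbli) (hperp c hcli)
    · -- independent triples off lines
      intro a b c hab hac hbc hon
      rw [hv, hv, hv, ← eval_d3]
      intro hz
      apply htB1
      rw [hB1]
      refine Set.mem_biUnion (Finset.mem_coe.2 (Finset.mem_univ (a, b, c))) ?_
      rw [hBset]
      dsimp only
      have hcond : (a, b, c).1 ≠ (a, b, c).2.1 ∧ (a, b, c).1 ≠ (a, b, c).2.2 ∧
          (a, b, c).2.1 ≠ (a, b, c).2.2 ∧ ¬ OnLine (a, b, c).1 (a, b, c).2.1 (a, b, c).2.2 :=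
        ⟨hab, hac, hbc, hon⟩
      rw [if_pos hcond]
      exact hz
  have hy0 : (fun pr : Fin 6 × Fin 3 => (G pr.1 pr.2).eval 0) = x :=
    funext fun pr => congrFun (h0 pr.1) pr.2
  have := curve_lemma (fun pr : Fin 6 × Fin 3 => G pr.1 pr.2)
    (realSpaceP (plcIndep QS)) T hTinf hTmem 0
  rwa [hy0] at this

lemma dt_smul_left (c : ℂ) (u v : V3) : dt (c • u) v = c * dt u v := by
  simp [dt]; ring

lemma cr_zero_symm {u v : V3} (h : cr u v = 0) : cr v u = 0 := by
  rw [cr_swap v u, h]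
  funext ν; simp

lemma mem_lineSet_fst (p : Fin 6) : p ∈ lineSet (linesOf p).1 :=
  (mem_lineSet_iff _ _).2 (Or.inl rfl)

lemma mem_lineSet_snd (p : Fin 6) : p ∈ lineSet (linesOf p).2 :=
  (mem_lineSet_iff _ _).2 (Or.inr rfl)

/-- main construction: rank-3 points of the circuit variety are in the QS variety -/
lemma rank3_construct (x : Fin 6 × Fin 3 → ℂ)
    (hd3 : ∀ a b c : Fin 6, OnLine a b c → d3 (vecs x a) (vecs x b) (vecs x c) = 0)
    (Hrank : ∃ a b c : Fin 6, d3 (vecs x a) (vecs x b) (vecs x c) ≠ 0) :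
    x ∈ zarClosure (realSpaceP (plcIndep QS)) := by
  classical
  -- choose a normal vector for every line
  have hnorm : ∀ li : Fin 4, ∃ nn : V3, nn ≠ 0 ∧ ∀ p ∈ lineSet li, dt nn (vecs x p) = 0 := by
    intro li
    obtain ⟨p, q, r, hpq, hpr, hqr, hon, hset⟩ := line_pts li
    obtain ⟨nn, hnn, hp, hq, hr⟩ := line_normal (hd3 p q r hon)
    refine ⟨nn, hnn, ?_⟩
    intro s hs
    rw [hset] at hs
    rcases Finset.mem_insert.1 hs with h | h
    · rw [h]; exact hp
    rcases Finset.mem_insert.1 h with h' | h'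
    · rw [h']; exact hq
    · rw [Finset.mem_singleton.1 h']; exact hr
  choose n hn0 hperp using hnorm
  -- three pairwise parallel normals are impossible
  have KC : ∀ a b c : Fin 4, a ≠ b → a ≠ c → b ≠ c →
      cr (n a) (n b) = 0 → cr (n a) (n c) = 0 → False := by
    intro a b c hab hac hbc h1 h2
    obtain ⟨u, v, w, hd⟩ := Hrank
    obtain ⟨cb, hcb⟩ := exists_smul_of_cr_eq_zero (hn0 a) h1
    obtain ⟨cc, hcc⟩ := exists_smul_of_cr_eq_zero (hn0 a) h2
    have hcb0 : cb ≠ 0 := by rintro rfl; rw [zero_smul] at hcb; exact hn0 b hcb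
    have hcc0 : cc ≠ 0 := by rintro rfl; rw [zero_smul] at hcc; exact hn0 c hcc
    have hall : ∀ q : Fin 6, dt (n a) (vecs x q) = 0 := by
      intro q
      rcases cover3 a b c hab hac hbc q with h | h | h
      · exact hperp a q h
      · have h' := hperp b q h
        rw [hcb, dt_smul_left] at h'
        rcases mul_eq_zero.1 h' with h'' | h''
        · exact absurd h'' hcb0
        · exact h''
      · have h' := hperp c q h
        rw [hcc, dt_smul_left] at h'
        rcases mul_eq_zero.1 h' with h'' | h''
        · exact absurd h'' hcc0
        · exact h''
    exact hd (d3_eq_zero_of_perp (hn0 a) (hall u) (hall v) (hall w))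
  -- choice of correction vectors
  have hm : ∀ j : Fin 4, ∃ mj : V3,
      (∀ p : Fin 6, (linesOf p).2 = j → cr (n (linesOf p).1) (n j) = 0 → vecs x p ≠ 0 →
        cr (n (linesOf p).1) mj = vecs x p) ∧
      ((¬ ∃ p : Fin 6, (linesOf p).2 = j ∧ cr (n (linesOf p).1) (n j) = 0 ∧ vecs x p ≠ 0)
        → mj = 0) := by
    intro j
    by_cases hex : ∃ p : Fin 6, (linesOf p).2 = j ∧ cr (n (linesOf p).1) (n j) = 0
      ∧ vecs x p ≠ 0
    · obtain ⟨p₀, hps, hpc, hpv⟩ := hex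
      have hperp0 : dt (n (linesOf p₀).1) (vecs x p₀) = 0 :=
        hperp (linesOf p₀).1 p₀ (mem_lineSet_fst p₀)
      obtain ⟨u, hu⟩ := exists_cr_eq (hn0 (linesOf p₀).1) hperp0
      refine ⟨u, ?_, ?_⟩
      · intro p hs hc hv
        have hpp : p = p₀ := by
          by_contra hne
          have hffne : (linesOf p).1 ≠ (linesOf p₀).1 := by
            intro he
            exact hne (linesOf_inj p p₀ (Prod.ext he (hs.trans hps.symm)))
          apply KC j (linesOf p).1 (linesOf p₀).1 ?_ ?_ hffne ?_ ?_
          · rw [← hs]; exact (fst_ne_snd p).symm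
          · rw [← hps]; exact (fst_ne_snd p₀).symm
          · exact cr_zero_symm hc
          · exact cr_zero_symm hpc
        rw [hpp]
        exact hu
      · intro hn
        exact absurd ⟨p₀, hps, hpc, hpv⟩ hn
    · push_neg at hex
      refine ⟨0, ?_, fun _ => rfl⟩
      intro p hs hc hv
      exact absurd (hex p hs hc) hv
  choose m hm1 hm2 using hm
  -- verify the hypotheses of the curve lemma at every point
  apply rank3_mem x n m
  intro p
  by_cases hv : vecs x p = 0
  · exact Or.inl hv
  by_cases hc : cr (n (linesOf p).1) (n (linesOf p).2) = 0
  · refine Or.inr (Or.inr ⟨hc, 1, one_ne_zero, ?_⟩)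
    have hmj := hm1 (linesOf p).2 p rfl hc hv
    have hmi : m (linesOf p).1 = 0 := by
      apply hm2 (linesOf p).1
      rintro ⟨p', hs', hc', hv'⟩
      apply KC (linesOf p).1 (linesOf p).2 (linesOf p').1 (fst_ne_snd p) ?_ ?_ hc ?_
      · rw [← hs']; exact (fst_ne_snd p').symm
      · intro he
        exact no_reverse p' p ⟨he.symm, hs'⟩
      · exact cr_zero_symm hc'
    rw [hmi, cr_zero_left, add_zero, one_smul]
    exact hmj.symm
  · have hdi : dt (n (linesOf p).1) (vecs x p) = 0 :=
      hperp (linesOf p).1 p (mem_lineSet_fst p)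
    have hdj : dt (n (linesOf p).2) (vecs x p) = 0 :=
      hperp (linesOf p).2 p (mem_lineSet_snd p)
    obtain ⟨cc, hcc⟩ := eq_smul_cr hdi hdj hc
    have hc0 : cc ≠ 0 := by
      rintro rfl
      rw [zero_smul] at hcc
      exact hv hcc
    exact Or.inr (Or.inl ⟨cc, hc0, hcc⟩)

lemma cr_self (a : V3) : cr a a = 0 := by
  funext ν; fin_cases ν <;> simp [cr] <;> ring

lemma cramer_combo {w u v : V3} (hcr : cr w u ≠ 0) (hd : d3 w u v = 0) :
    ∃ α β : ℂ, v = α • w + β • u := by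
  obtain ⟨k, hk⟩ : ∃ k : Fin 3, cr w u k ≠ 0 := by
    rcases (vec_ne_zero_iff _).1 hcr with h | h | h
    exacts [⟨0, h⟩, ⟨1, h⟩, ⟨2, h⟩]
  set e : V3 := fun j => if j = k then 1 else 0 with he
  have hD : d3 w u e = cr w u k := d3_basis w u k
  have hid := cramer_id w u v e
  refine ⟨-(d3 u v e) / cr w u k, d3 w v e / cr w u k, ?_⟩
  funext ν
  have h := congrFun hid ν
  simp only [Pi.add_apply, Pi.sub_apply, Pi.smul_apply, smul_eq_mul, hd, zero_mul,
    zero_smul, sub_zero, Pi.zero_apply, hD] at h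
  simp only [Pi.add_apply, Pi.smul_apply, smul_eq_mul]
  field_simp
  linear_combination h

lemma cr_e1e2 : cr (![1, 0, 0] : V3) (![0, 1, 0] : V3) ≠ 0 := by
  apply (vec_ne_zero_iff _).2
  right; right
  show ((![1, 0, 0] : V3) 0 * (![0, 1, 0] : V3) 1
    - (![1, 0, 0] : V3) 1 * (![0, 1, 0] : V3) 0) ≠ 0
  norm_num

/-- rank ≤ 2 points of the circuit variety lie in the U26 variety. -/
lemma rank_le2_mem (x : Fin 6 × Fin 3 → ℂ)
    (Hall : ∀ a b c : Fin 6, a ≠ b → a ≠ c → b ≠ c →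
      d3 (vecs x a) (vecs x b) (vecs x c) = 0) :
    x ∈ zarClosure (realSpaceP U26Indep) := by
  classical
  -- find a spanning plane
  obtain ⟨w, u, hcr, α, β, hcomb⟩ : ∃ (w u : V3), cr w u ≠ 0 ∧ ∃ α β : Fin 6 → ℂ,
      ∀ p : Fin 6, vecs x p = α p • w + β p • u := by
    by_cases hex : ∃ a b : Fin 6, cr (vecs x a) (vecs x b) ≠ 0
    · obtain ⟨a, b, hab⟩ := hex
      have hane : a ≠ b := by
        rintro rfl
        rw [cr_self] at hab
        exact hab rfl
      have hcombo : ∀ p : Fin 6, ∃ αβ : ℂ × ℂ,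
          vecs x p = αβ.1 • vecs x a + αβ.2 • vecs x b := by
        intro p
        by_cases hpa : p = a
        · exact ⟨(1, 0), by rw [hpa]; funext ν; simp⟩
        by_cases hpb : p = b
        · exact ⟨(0, 1), by rw [hpb]; funext ν; simp⟩
        · obtain ⟨α', β', h'⟩ := cramer_combo hab
            (Hall a b p hane (fun h => hpa h.symm) (fun h => hpb h.symm))
          exact ⟨(α', β'), h'⟩
      choose αβ hαβ using hcombo
      exact ⟨vecs x a, vecs x b, hab, fun p => (αβ p).1, fun p => (αβ p).2, hαβ⟩
    · push_neg at hex
      by_cases hz : ∃ a : Fin 6, vecs x a ≠ 0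
      · obtain ⟨a, ha⟩ := hz
        obtain ⟨u, hu⟩ := exists_cr_ne_zero ha
        have : ∀ p : Fin 6, ∃ c : ℂ, vecs x p = c • vecs x a := by
          intro p
          exact exists_smul_of_cr_eq_zero ha (hex a p)
        choose c hc using this
        exact ⟨vecs x a, u, hu, c, fun _ => 0, fun p => by rw [hc p]; funext ν; simp⟩
      · push_neg at hz
        refine ⟨(![1, 0, 0] : V3), (![0, 1, 0] : V3), cr_e1e2,
          fun _ => 0, fun _ => 0, ?_⟩
        intro p
        rw [hz p]
        funext ν; simp
  -- the curve
  set κ : Fin 6 → ℂ := fun p => (p : ℕ) + 1 with hκ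
  have hκinj : ∀ p q : Fin 6, p ≠ q → κ p ≠ κ q := by
    intro p q hpq h
    apply hpq
    simp only [hκ] at h
    have h2 := add_right_cancel h
    exact Fin.ext (Nat.cast_injective h2)
  set G : Fin 6 → PV := fun p ν =>
    (Polynomial.C (α p) + Polynomial.X) * Polynomial.C (w ν)
      + (Polynomial.C (β p) + Polynomial.X * Polynomial.C (κ p)) * Polynomial.C (u ν)
    with hG
  have hGeval : ∀ (t : ℂ) (p : Fin 6), evalV t (G p)
      = (α p + t) • w + (β p + t * κ p) • u := by
    intro t p
    funext ν
    simp only [hG, evalV, Polynomial.eval_add, Polynomial.eval_mul, Polynomial.eval_C,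
      Polynomial.eval_X, Pi.add_apply, Pi.smul_apply, smul_eq_mul]
  -- the pair polynomials
  set Q : Fin 6 → Fin 6 → Polynomial ℂ := fun p q =>
    (Polynomial.C (α p) + Polynomial.X) * (Polynomial.C (β q) + Polynomial.X * Polynomial.C (κ q))
      - (Polynomial.C (α q) + Polynomial.X) * (Polynomial.C (β p) + Polynomial.X * Polynomial.C (κ p))
    with hQ
  have hQne : ∀ p q : Fin 6, p ≠ q → Q p q ≠ 0 := by
    intro p q hpq
    have hexp : Q p q = Polynomial.C (α p * β q - α q * β p)
        + Polynomial.C (α p * κ q + β q - α q * κ p - β p) * Polynomial.X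
        + Polynomial.C (κ q - κ p) * Polynomial.X ^ 2 := by
      rw [hQ]
      simp only [map_sub, map_add, map_mul]
      ring
    rw [hexp]
    exact quad_ne_zero _ _ _ (sub_ne_zero.2 (fun h => hκinj p q hpq h.symm))
  set B : Set ℂ := ⋃ pq ∈ (Finset.univ : Finset (Fin 6 × Fin 6)),
    (if pq.1 ≠ pq.2 then {t | (Q pq.1 pq.2).IsRoot t} else ∅) with hB
  have hBfin : B.Finite := by
    apply Set.Finite.biUnion (Finset.univ : Finset (Fin 6 × Fin 6)).finite_toSet
    intro pq _
    split_ifs with h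
    · exact Polynomial.finite_setOf_isRoot (hQne pq.1 pq.2 h)
    · exact Set.finite_empty
  have hTinf : Bᶜ.Infinite := hBfin.infinite_compl
  have hTmem : ∀ t ∈ Bᶜ, (fun pr : Fin 6 × Fin 3 => (G pr.1 pr.2).eval t)
      ∈ realSpaceP U26Indep := by
    intro t ht
    have hv : ∀ p : Fin 6, vecs (fun pr : Fin 6 × Fin 3 => (G pr.1 pr.2).eval t) p
        = evalV t (G p) := fun p => rfl
    apply mem_realSpace_U26
    · intro a b c _ _ _
      rw [hv, hv, hv, hGeval, hGeval, hGeval]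
      exact d3_plane _ _ _ _ _ _ w u
    · intro a b hab
      rw [hv, hv, hGeval, hGeval, cr_plane]
      have hDt : (α a + t) * (β b + t * κ b) - (β a + t * κ a) * (α b + t) ≠ 0 := by
        intro h
        apply ht
        rw [hB]
        refine Set.mem_biUnion (Finset.mem_coe.2 (Finset.mem_univ (a, b))) ?_
        dsimp only
        rw [if_pos hab]
        show (Q a b).eval t = 0
        rw [hQ]
        simp only [Polynomial.eval_sub, Polynomial.eval_mul, Polynomial.eval_add,
          Polynomial.eval_C, Polynomial.eval_X]
        linear_combination h
      intro h
      apply hDt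
      by_contra hne
      exact absurd h (smul_ne_zero hne hcr)
  have hy0 : (fun pr : Fin 6 × Fin 3 => (G pr.1 pr.2).eval 0) = x := by
    funext pr
    have h := congrFun (hGeval 0 pr.1) pr.2
    simp only [mul_zero, zero_mul, add_zero] at h
    have h2 := congrFun (hcomb pr.1) pr.2
    show (G pr.1 pr.2).eval 0 = x pr
    calc (G pr.1 pr.2).eval 0 = evalV 0 (G pr.1) pr.2 := rfl
      _ = ((α pr.1 + 0) • w + (β pr.1 + 0 * κ pr.1) • u) pr.2 := by rw [hGeval]
      _ = (α pr.1 • w + β pr.1 • u) pr.2 := by norm_num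
      _ = vecs x pr.1 pr.2 := (h2).symm
      _ = x pr := rfl
  have := curve_lemma (fun pr : Fin 6 × Fin 3 => G pr.1 pr.2)
    (realSpaceP U26Indep) Bᶜ hTinf hTmem 0
  rwa [hy0] at this

lemma d3_self12 (a c : Fin 3 → ℂ) : d3 a a c = 0 := by
  show dt (cr a a) c = 0
  rw [cr_self]
  simp [dt]

lemma d3_self13 (a b : Fin 3 → ℂ) : d3 a b a = 0 := by
  show dt (cr a b) a = 0
  rw [dt_comm]
  exact dt_cr_left a b

lemma d3_self23 (a b : Fin 3 → ℂ) : d3 a b b = 0 := by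
  show dt (cr a b) b = 0
  rw [dt_comm]
  exact dt_cr_right a b

def XV (p : Fin 6) : Fin 3 → MvPolynomial (Fin 6 × Fin 3) ℂ := fun ν => MvPolynomial.X (p, ν)

def DETP (a b c : Fin 6) : MvPolynomial (Fin 6 × Fin 3) ℂ := d3 (XV a) (XV b) (XV c)

lemma eval_DETP (y : Fin 6 × Fin 3 → ℂ) (a b c : Fin 6) :
    MvPolynomial.eval y (DETP a b c) = d3 (vecs y a) (vecs y b) (vecs y c) := by
  simp [DETP, XV, d3, dt, cr, vecs]

/-- set-level triple for distinct points is not plc-independent when on a line -/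
lemma not_plcIndep_of_online {a b c : Fin 6} (hab : a ≠ b) (hac : a ≠ c) (hbc : b ≠ c)
    (hon : OnLine a b c) : ¬ plcIndep QS ({a, b, c} : Set (Fin 6)) := by
  rintro ⟨h1, h2⟩
  obtain ⟨l, hl, hal, hbl, hcl⟩ := hon
  refine h2 (Set.ncard_eq_three.2 ⟨a, b, c, hab, hac, hbc, rfl⟩) ⟨l, hl, ?_⟩
  intro z hz
  rcases hz with h | h | h
  · rw [h]; exact hal
  · rw [h]; exact hbl
  · rw [Set.mem_singleton_iff.1 h]; exact hcl

/-- the easy inclusion: both varieties are contained in the circuit variety. -/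
lemma varP_subset_circuit {P : Set (Fin 6) → Prop}
    (hvan : ∀ a b c : Fin 6, a ≠ b → a ≠ c → b ≠ c → OnLine a b c →
      ∀ y ∈ realSpaceP P, d3 (vecs y a) (vecs y b) (vecs y c) = 0) :
    varP P ⊆ circuitVarP (plcIndep QS) := by
  intro x hx S hP hLI
  rcases Nat.lt_or_ge S.ncard 4 with h4 | h4
  · have h1 : S.ncard ≤ 3 := by omega
    have hne : ¬(S.ncard = 3 → ¬∃ l ∈ QS, S ⊆ ↑l) := fun h => hP ⟨h1, h⟩
    push_neg at hne
    obtain ⟨h3, l, hl, hSl⟩ := hne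
    obtain ⟨a, b, c, hab, hac, hbc, rfl⟩ := Set.ncard_eq_three.1 h3
    have hon : OnLine a b c := by
      refine ⟨l, hl, ?_, ?_, ?_⟩ <;> apply hSl <;> simp
    have hz := hx (DETP a b c) (fun y hy => by
      rw [eval_DETP]
      exact hvan a b c hab hac hbc hon y hy)
    rw [eval_DETP] at hz
    rw [li_set_triple_iff hab hac hbc, li_triple_iff] at hLI
    exact hLI hz
  · exact not_li_of_ncard_ge h4 hLI

/-- hard inclusion -/
lemma circuit_subset (x : Fin 6 × Fin 3 → ℂ) (hx : x ∈ circuitVarP (plcIndep QS)) :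
    x ∈ varP (plcIndep QS) ∨ x ∈ varP U26Indep := by
  have hd3 : ∀ a b c : Fin 6, OnLine a b c → d3 (vecs x a) (vecs x b) (vecs x c) = 0 := by
    intro a b c hon
    by_cases hab : a = b
    · rw [hab]; exact d3_self12 _ _
    by_cases hac : a = c
    · rw [hac]; exact d3_self13 _ _
    by_cases hbc : b = c
    · rw [hbc]; exact d3_self23 _ _
    have := hx ({a, b, c} : Set (Fin 6)) (not_plcIndep_of_online hab hac hbc hon)
    rw [li_set_triple_iff hab hac hbc, li_triple_iff] at this
    exact not_not.1 this
  by_cases hall : ∀ a b c : Fin 6, a ≠ b → a ≠ c → b ≠ c →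
      d3 (vecs x a) (vecs x b) (vecs x c) = 0
  · exact Or.inr (rank_le2_mem x hall)
  · push_neg at hall
    obtain ⟨a, b, c, _, _, _, hne⟩ := hall
    exact Or.inl (rank3_construct x hd3 ⟨a, b, c, hne⟩)

lemma main_decomposition :
    circuitVarP (plcIndep QS) = varP (plcIndep QS) ∪ varP U26Indep := by
  ext x
  simp only [Set.mem_union]
  constructor
  · exact circuit_subset x
  · rintro (h | h)
    · refine varP_subset_circuit ?_ h
      intro a b c hab hac hbc hon y hy
      have := (hy ({a, b, c} : Set (Fin 6))).not.2 (not_plcIndep_of_online hab hac hbc hon)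
      rw [li_set_triple_iff hab hac hbc, li_triple_iff] at this
      exact not_not.1 this
    · refine varP_subset_circuit ?_ h
      intro a b c hab hac hbc hon y hy
      have hcard : ¬ U26Indep ({a, b, c} : Set (Fin 6)) := by
        show ¬ (Set.ncard _ ≤ 2)
        rw [Set.ncard_eq_three.2 ⟨a, b, c, hab, hac, hbc, rfl⟩]
        omega
      have := (hy ({a, b, c} : Set (Fin 6))).not.2 hcard
      rw [li_set_triple_iff hab hac hbc, li_triple_iff] at this
      exact not_not.1 this

end QSproof
end

theorem stmt11 :
    -- every point of QS has degree 2,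
    (∀ p : Fin 6, degreeOf QS p = 2) ∧
    -- every proper submatroid of QS is nilpotent,
    (∀ A : Finset (Fin 6), A ⊂ Finset.univ → Nilpotent (A, restrictLines QS A)) ∧
    -- consequently the circuit variety decomposes as V_QS ∪ V_{U_{2,6}}:
    circuitVarP (plcIndep QS) = varP (plcIndep QS) ∪ varP U26Indep := by
  refine ⟨by decide, ?_, QSproof.main_decomposition⟩
  intro A hA
  exact ⟨2, by revert hA; revert A; decide⟩
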